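/- arXiv:1706.01219 — 2 statements merged into one kernel-verified Lean document; each statement's English description precedes it below -/
import Mathlib

section
/- Let n ≥ 2 and let z ∈ ℂⁿ be nonzero. Then det G(z) = ((n−1)/n)^{n−1} · |z|^{−2n}. In particular det G(z) is a positive real number. (This is the determinant computation det(g_{i j̄}) used to show that the first Chern-Ricci curvature of the perturbed Hopf metric equals n·√−1 ∂∂̄ log|z|².) -/
open Complex Matrix BigOperators

/-- `|z|² = Σⱼ zⱼ·conj(zⱼ)` as a real number. -/
noncomputable def nsq {n : ℕ} (z : Fin n → ℂ) : ℝ := ∑ j, Complex.normSq (z j)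

/-- The metric coefficient matrix
`G(z)_{ij} = |z|⁻²( ((n−1)/n)·δ_{ij} + conj(z_i)·z_j/(n|z|²) )` of the perturbed
Hopf metric `ω_g = ω₀ − (1/n)√−1 ∂∂̄ log|z|²`. -/
noncomputable def hopfG {n : ℕ} (z : Fin n → ℂ) : Matrix (Fin n) (Fin n) ℂ :=
  fun i j => ((nsq z : ℂ))⁻¹ *
    ((((n : ℂ) - 1) / (n : ℂ)) * (if i = j then 1 else 0) +
      (starRingEnd ℂ) (z i) * z j / ((n : ℂ) * (nsq z : ℂ)))

/-- The inverse metric matrix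
`H(z)_{ij} = |z|²( (n/(n−1))·δ_{ij} − z_i·conj(z_j)/((n−1)|z|²) )`. -/
noncomputable def hopfH {n : ℕ} (z : Fin n → ℂ) : Matrix (Fin n) (Fin n) ℂ :=
  fun i j => ((nsq z : ℂ)) *
    (((n : ℂ) / ((n : ℂ) - 1)) * (if i = j then 1 else 0) -
      z i * (starRingEnd ℂ) (z j) / (((n : ℂ) - 1) * (nsq z : ℂ)))

/-- `det G(z) = ((n−1)/n)^{n−1}·|z|^{−2n}`; in particular `det G(z)` is a positive
real number. -/
theorem det_hopfG (n : ℕ) (hn : 2 ≤ n) (z : Fin n → ℂ) (hz : z ≠ 0) :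
    (hopfG z).det = (((((n : ℝ) - 1) / n) ^ (n - 1) * ((nsq z)⁻¹) ^ n : ℝ) : ℂ) ∧
    0 < (((n : ℝ) - 1) / n) ^ (n - 1) * ((nsq z)⁻¹) ^ n := by
  have hspos : 0 < nsq z := by
    have : ∃ j, z j ≠ 0 := by
      by_contra h
      push_neg at h
      exact hz (funext h)
    obtain ⟨j, hj⟩ := this
    exact Finset.sum_pos' (fun i _ => Complex.normSq_nonneg _)
      ⟨j, Finset.mem_univ j, Complex.normSq_pos.mpr hj⟩
  have hs : (nsq z : ℂ) ≠ 0 := by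
    exact_mod_cast (ne_of_gt hspos)
  have hnR : (0:ℝ) < n := by positivity
  have hn1R : (0:ℝ) < (n:ℝ) - 1 := by
    have : (2:ℝ) ≤ n := by exact_mod_cast hn
    linarith
  have hnC : (n:ℂ) ≠ 0 := Nat.cast_ne_zero.mpr (by omega)
  have hn1C : (n:ℂ) - 1 ≠ 0 := by
    intro h
    have : (n:ℂ) = 1 := by linear_combination h
    have : (n:ℕ) = 1 := by exact_mod_cast this
    omega
  set s : ℂ := (nsq z : ℂ)
  set a : ℂ := ((n:ℂ) - 1) / n with ha
  have haz : a ≠ 0 := div_ne_zero hn1C hnC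
  have hsum : (∑ j, z j * (starRingEnd ℂ) (z j)) = s := by
    simp only [Complex.mul_conj, s, nsq]
    push_cast
    ring
  have hmat : hopfG z = (s⁻¹ * a) •
      (1 + Matrix.replicateCol (Fin 1) (fun i => (starRingEnd ℂ) (z i)) *
        Matrix.replicateRow (Fin 1) (fun j => z j / (((n:ℂ) - 1) * s))) := by
    ext i j
    simp only [hopfG, Matrix.smul_apply, Matrix.add_apply, Matrix.mul_apply,
      Matrix.replicateCol_apply, Matrix.replicateRow_apply, Fin.sum_univ_one,
      Matrix.one_apply, smul_eq_mul, ha]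
    by_cases h : i = j
    · simp only [if_pos h]
      simp only [show ((nsq z : ℂ)) = s from rfl]
      field_simp
    · simp only [if_neg h]
      simp only [show ((nsq z : ℂ)) = s from rfl]
      field_simp
  constructor
  · rw [hmat, Matrix.det_smul]
    erw [Matrix.det_one_add_replicateCol_mul_replicateRow (ι := Fin 1)]
    have hdot : (fun j => z j / (((n:ℂ) - 1) * s)) ⬝ᵥ (fun i => (starRingEnd ℂ) (z i))
        = 1 / ((n:ℂ) - 1) := by
      simp only [dotProduct]
      rw [show (∑ j, z j / (((n:ℂ) - 1) * s) * (starRingEnd ℂ) (z j))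
          = (∑ j, z j * (starRingEnd ℂ) (z j)) / (((n:ℂ) - 1) * s) by
        rw [Finset.sum_div]; congr 1; ext j; ring]
      rw [hsum]
      field_simp
    rw [hdot, Fintype.card_fin]
    have h1 : (1 : ℂ) + 1 / ((n:ℂ) - 1) = a⁻¹ := by
      rw [ha]; field_simp; ring
    rw [h1]
    have hcast : (((((n : ℝ) - 1) / n) ^ (n - 1) * ((nsq z)⁻¹) ^ n : ℝ) : ℂ)
        = a ^ (n - 1) * (s⁻¹) ^ n := by
      push_cast [ha, s]
      ring
    rw [hcast]
    have hpow : (s⁻¹ * a) ^ n = (s⁻¹) ^ n * (a ^ (n-1) * a) := by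
      rw [mul_pow]
      congr 1
      rw [← pow_succ]
      congr 1
      omega
    rw [hpow]
    field_simp
  · have h1 : 0 < (((n : ℝ) - 1) / n) ^ (n - 1) := by positivity
    have h2 : 0 < ((nsq z)⁻¹) ^ n := by positivity
    exact mul_pos h1 h2
end

section
/- Let n ≥ 2 and let z ∈ ℂⁿ be nonzero. Then for every index i, Σ_{k=1}^n H(z)_{k i}·conj(z_k) − (Σ_{q=1}^n H(z)_{q q})·conj(z_i) = −n·|z|²·conj(z_i). (This contraction identity is the component form of the formula ∂̄*ω_g = √−1 Λ ∂ω_g = −n√−1 ∂log|z|² for the perturbed Hopf metric, which yields (1/2)(∂∂*ω_g + ∂̄∂̄*ω_g) = n√−1 ∂∂̄ log|z|².) -/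
open Complex Matrix BigOperators

/-- `Σ_k g^{k ī} z̄^k − (Σ_q g^{q q̄}) z̄^i = −n|z|² z̄^i`, the component form of
`∂̄*ω_g = −n√−1 ∂log|z|²` for the perturbed Hopf metric. -/
theorem hopfH_contract_sub_trace (n : ℕ) (hn : 2 ≤ n) (z : Fin n → ℂ) (hz : z ≠ 0) :
    ∀ i, (∑ k, hopfH z k i * (starRingEnd ℂ) (z k)) -
        (∑ q, hopfH z q q) * (starRingEnd ℂ) (z i) =
      -(n : ℂ) * (nsq z : ℂ) * (starRingEnd ℂ) (z i) := by
  intro i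
  have hSpos : 0 < nsq z := by
    obtain ⟨j, hj⟩ := Function.ne_iff.mp hz
    exact Finset.sum_pos' (fun j _ => Complex.normSq_nonneg _)
      ⟨j, Finset.mem_univ j, Complex.normSq_pos.mpr hj⟩
  have hS : (nsq z : ℂ) ≠ 0 := by exact_mod_cast hSpos.ne'
  have hn1 : (n : ℂ) - 1 ≠ 0 := by
    have : (n : ℂ) ≠ 1 := by exact_mod_cast (by omega : n ≠ 1)
    exact sub_ne_zero.mpr this
  have hsum : ∑ k, z k * (starRingEnd ℂ) (z k) = (nsq z : ℂ) := by
    simp [nsq, Complex.mul_conj]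
  have e1 : ∑ k, hopfH z k i * (starRingEnd ℂ) (z k)
      = (nsq z : ℂ) * ((n : ℂ) / ((n : ℂ) - 1)) * (starRingEnd ℂ) (z i)
        - (nsq z : ℂ) * ((starRingEnd ℂ) (z i)) / ((n : ℂ) - 1) := by
    have : ∀ k, hopfH z k i * (starRingEnd ℂ) (z k)
        = (nsq z : ℂ) * ((n : ℂ) / ((n : ℂ) - 1)) * (if k = i then 1 else 0) * (starRingEnd ℂ) (z k)
          - (z k * (starRingEnd ℂ) (z k)) * ((starRingEnd ℂ) (z i) / ((n : ℂ) - 1)) := by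
      intro k
      simp only [hopfH]
      rcases eq_or_ne k i with h | h <;>
        simp only [h, if_true, eq_self_iff_true, if_false] <;> field_simp <;> ring
    rw [Finset.sum_congr rfl (fun k _ => this k), Finset.sum_sub_distrib,
      ← Finset.sum_mul, hsum]
    simp [Finset.sum_ite_eq' Finset.univ i, mul_ite]
    ring
  have e2 : ∑ q, hopfH z q q
      = (nsq z : ℂ) * ((n : ℂ) * (n : ℂ) / ((n : ℂ) - 1)) - (nsq z : ℂ) / ((n : ℂ) - 1) := by
    have : ∀ q : Fin n, hopfH z q q
        = (nsq z : ℂ) * ((n : ℂ) / ((n : ℂ) - 1))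
          - (z q * (starRingEnd ℂ) (z q)) / ((n : ℂ) - 1) := by
      intro q
      simp only [hopfH, if_pos rfl, eq_self_iff_true, if_true]
      field_simp
    rw [Finset.sum_congr rfl (fun q _ => this q), Finset.sum_sub_distrib,
      ← Finset.sum_div, hsum]
    simp [Finset.sum_const, Finset.card_univ]
    ring
  rw [e1, e2]
  field_simp
  ring
end
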